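/- arXiv:2602.20846 — 2 statements merged into one kernel-verified Lean document; each statement's English description precedes it below -/
import Mathlib

section
/- If the operator norm of W plus one quarter of the product ‖w₁‖·‖w_out‖ is strictly less than 1, then the closed-loop reservoir map Φ is a contraction on ℝ^d with Lipschitz constant at most ‖W‖_op + (1/4)‖w₁‖‖w_out‖; hence Φ has a unique fixed point x*, and for every initial point x₀ the iterates Φ^t(x₀) converge to x* with ‖Φ^t(x₀) − x*‖ ≤ (‖W‖_op + (1/4)‖w₁‖‖w_out‖)^t · ‖x₀ − x*‖. -/
open scoped RealInnerProductSpace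


/-- The logistic sigmoid `σ(z) = 1/(1 + exp (-z))`. -/
noncomputable def logistic (z : ℝ) : ℝ := 1 / (1 + Real.exp (-z))

/-- The closed-loop reservoir map on Euclidean `ℝ^d`, with `W` given as a (continuous)
linear map so that `‖W‖` is its operator norm on Euclidean space. -/
noncomputable def Phi (d : ℕ)
    (W : EuclideanSpace ℝ (Fin d) →L[ℝ] EuclideanSpace ℝ (Fin d))
    (w1 w2 b wout : EuclideanSpace ℝ (Fin d)) (bout aopp : ℝ)
    (x : EuclideanSpace ℝ (Fin d)) : EuclideanSpace ℝ (Fin d) :=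
  WithLp.toLp 2 fun i => Real.tanh (W x i
    + logistic ((∑ j, wout j * x j) + bout) * w1 i + aopp * w2 i + b i)

lemma tanh_lipschitz (a c : ℝ) : |Real.tanh a - Real.tanh c| ≤ |a - c| := by
  have htanh : ∀ x : ℝ, HasDerivAt Real.tanh (1 / Real.cosh x ^ 2) x := by
    intro x
    have hcosh : Real.cosh x ≠ 0 := ne_of_gt (Real.cosh_pos x)
    have h : HasDerivAt (fun y => Real.sinh y / Real.cosh y)
        ((Real.cosh x * Real.cosh x - Real.sinh x * Real.sinh x) / Real.cosh x ^ 2) x :=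
      (Real.hasDerivAt_sinh x).div (Real.hasDerivAt_cosh x) hcosh
    have heq : (fun y => Real.sinh y / Real.cosh y) = Real.tanh := by
      funext y; rw [Real.tanh_eq_sinh_div_cosh]
    rw [heq] at h
    convert h using 1
    have hid := Real.cosh_sq_sub_sinh_sq x
    have : Real.cosh x * Real.cosh x - Real.sinh x * Real.sinh x = 1 := by nlinarith [hid]
    rw [this]
  have hderiv : ∀ x ∈ Set.univ, HasDerivWithinAt Real.tanh (1 / Real.cosh x ^ 2) Set.univ x := by
    intro x _
    exact (htanh x).hasDerivWithinAt
  have hbound : ∀ x ∈ Set.univ, ‖(1 : ℝ) / Real.cosh x ^ 2‖ ≤ 1 := by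
    intro x _
    have h1 : (1 : ℝ) ≤ Real.cosh x := Real.one_le_cosh x
    have h2 : (1 : ℝ) ≤ Real.cosh x ^ 2 := by nlinarith
    rw [Real.norm_eq_abs, abs_div, abs_one, abs_of_pos (by positivity)]
    rw [div_le_one (by positivity)]
    exact h2
  have := convex_univ.norm_image_sub_le_of_norm_hasDerivWithin_le hderiv hbound
    (Set.mem_univ c) (Set.mem_univ a)
  simpa [Real.norm_eq_abs] using this

lemma logistic_hasDerivAt (z : ℝ) :
    HasDerivAt logistic (logistic z * (1 - logistic z)) z := by
  have h0 : (0:ℝ) < 1 + Real.exp (-z) := by positivity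
  have h : HasDerivAt (fun z : ℝ => 1 / (1 + Real.exp (-z)))
      (-(-Real.exp (-z)) / (1 + Real.exp (-z)) ^ 2) z := by
    have he : HasDerivAt (fun z : ℝ => 1 + Real.exp (-z)) (-Real.exp (-z)) z := by
      have := (Real.hasDerivAt_exp (-z)).comp z (hasDerivAt_neg z)
      simpa using this.const_add 1
    have := (hasDerivAt_const z (1:ℝ)).div he (ne_of_gt h0)
    refine this.congr_deriv ?_
    ring
  refine h.congr_deriv ?_
  unfold logistic
  field_simp
  ring

lemma logistic_lipschitz (a c : ℝ) : |logistic a - logistic c| ≤ (1/4) * |a - c| := by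
  have hderiv : ∀ x ∈ Set.univ,
      HasDerivWithinAt logistic (logistic x * (1 - logistic x)) Set.univ x :=
    fun x _ => (logistic_hasDerivAt x).hasDerivWithinAt
  have hbound : ∀ x ∈ Set.univ, ‖logistic x * (1 - logistic x)‖ ≤ 1/4 := by
    intro x _
    have h0 : (0:ℝ) < 1 + Real.exp (-x) := by positivity
    have h1 : 0 < logistic x := by unfold logistic; positivity
    have h2 : logistic x < 1 := by
      unfold logistic
      rw [div_lt_one h0]
      linarith [Real.exp_pos (-x)]
    rw [Real.norm_eq_abs, abs_of_pos (by nlinarith)]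
    nlinarith [sq_nonneg (logistic x - 1/2)]
  have := convex_univ.norm_image_sub_le_of_norm_hasDerivWithin_le hderiv hbound
    (Set.mem_univ c) (Set.mem_univ a)
  simpa [Real.norm_eq_abs] using this

/-- If `‖W‖_op + (1/4)‖w₁‖‖w_out‖ < 1` then `Φ` is a contraction on `ℝ^d`
with Lipschitz constant at most `‖W‖_op + (1/4)‖w₁‖‖w_out‖`; hence `Φ` has a unique fixed
point `x*`, and for every initial point `x₀` the iterates `Φ^[t] x₀` converge to `x*` with
`‖Φ^[t] x₀ − x*‖ ≤ (‖W‖_op + (1/4)‖w₁‖‖w_out‖)^t · ‖x₀ − x*‖`. -/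
theorem stmt1 (d : ℕ) (hd : 1 ≤ d)
    (W : EuclideanSpace ℝ (Fin d) →L[ℝ] EuclideanSpace ℝ (Fin d))
    (w1 w2 b wout : EuclideanSpace ℝ (Fin d)) (bout aopp : ℝ)
    (haopp : aopp ∈ Set.Icc (0 : ℝ) 1)
    (hcontr : ‖W‖ + (1 / 4) * ‖w1‖ * ‖wout‖ < 1) :
    (∀ x y : EuclideanSpace ℝ (Fin d),
      ‖Phi d W w1 w2 b wout bout aopp x - Phi d W w1 w2 b wout bout aopp y‖ ≤
        (‖W‖ + (1 / 4) * ‖w1‖ * ‖wout‖) * ‖x - y‖) ∧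
    ∃ xstar : EuclideanSpace ℝ (Fin d),
      Phi d W w1 w2 b wout bout aopp xstar = xstar ∧
      (∀ y : EuclideanSpace ℝ (Fin d), Phi d W w1 w2 b wout bout aopp y = y → y = xstar) ∧
      ∀ (x₀ : EuclideanSpace ℝ (Fin d)) (t : ℕ),
        ‖(Phi d W w1 w2 b wout bout aopp)^[t] x₀ - xstar‖ ≤
          (‖W‖ + (1 / 4) * ‖w1‖ * ‖wout‖) ^ t * ‖x₀ - xstar‖ := by
  set K : ℝ := ‖W‖ + (1 / 4) * ‖w1‖ * ‖wout‖ with hK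
  have hK0 : 0 ≤ K := by positivity
  set f := Phi d W w1 w2 b wout bout aopp with hf
  -- main Lipschitz estimate
  have hlip : ∀ x y : EuclideanSpace ℝ (Fin d), ‖f x - f y‖ ≤ K * ‖x - y‖ := by
    intro x y
    set c : ℝ := logistic ((∑ j, wout j * x j) + bout)
      - logistic ((∑ j, wout j * y j) + bout) with hc
    set z : EuclideanSpace ℝ (Fin d) := W (x - y) + c • w1 with hz
    -- pointwise bound
    have hpt : ∀ i, |(f x - f y) i| ≤ |z i| := by
      intro i
      have hsub : (f x - f y) i = f x i - f y i := rfl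
      have hzi : z i = (W x i - W y i) + c * w1 i := by
        show W (x - y) i + (c • w1) i = _
        rw [map_sub]
        rfl
      rw [hsub]
      have : f x i - f y i = Real.tanh (W x i
          + logistic ((∑ j, wout j * x j) + bout) * w1 i + aopp * w2 i + b i)
          - Real.tanh (W y i
          + logistic ((∑ j, wout j * y j) + bout) * w1 i + aopp * w2 i + b i) := rfl
      rw [this]
      calc _ ≤ |(W x i + logistic ((∑ j, wout j * x j) + bout) * w1 i + aopp * w2 i + b i)
          - (W y i + logistic ((∑ j, wout j * y j) + bout) * w1 i + aopp * w2 i + b i)| :=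
            tanh_lipschitz _ _
        _ = |z i| := by rw [hzi, hc]; ring_nf
    -- norm comparison
    have hnorm : ‖f x - f y‖ ≤ ‖z‖ := by
      rw [EuclideanSpace.norm_eq, EuclideanSpace.norm_eq]
      apply Real.sqrt_le_sqrt
      apply Finset.sum_le_sum
      intro i _
      have := hpt i
      simp only [Real.norm_eq_abs]
      nlinarith [abs_nonneg ((f x - f y) i), abs_nonneg (z i)]
    -- bound on c
    have hinner : (∑ j, wout j * x j) - (∑ j, wout j * y j) = (inner ℝ wout (x - y) : ℝ) := by
      rw [PiLp.inner_apply, ← Finset.sum_sub_distrib]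
      refine Finset.sum_congr rfl fun j _ => ?_
      simp only [RCLike.inner_apply, starRingEnd_apply, star_trivial, PiLp.sub_apply]
      ring
    have hcbound : |c| ≤ (1/4) * (‖wout‖ * ‖x - y‖) := by
      calc |c| ≤ (1/4) * |((∑ j, wout j * x j) + bout) - ((∑ j, wout j * y j) + bout)| :=
            logistic_lipschitz _ _
        _ = (1/4) * |(inner ℝ wout (x - y) : ℝ)| := by
            congr 1
            rw [← hinner]; ring_nf
        _ ≤ (1/4) * (‖wout‖ * ‖x - y‖) := by
            have := abs_real_inner_le_norm wout (x - y)
            linarith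
    have hznorm : ‖z‖ ≤ K * ‖x - y‖ := by
      calc ‖z‖ ≤ ‖W (x - y)‖ + ‖c • w1‖ := norm_add_le _ _
        _ ≤ ‖W‖ * ‖x - y‖ + |c| * ‖w1‖ := by
            gcongr
            · exact W.le_opNorm _
            · rw [norm_smul, Real.norm_eq_abs]
        _ ≤ ‖W‖ * ‖x - y‖ + ((1/4) * (‖wout‖ * ‖x - y‖)) * ‖w1‖ := by
            gcongr
        _ = K * ‖x - y‖ := by rw [hK]; ring
    linarith
  refine ⟨hlip, ?_⟩
  -- Banach fixed point
  have hK0' : (0:ℝ) ≤ K := hK0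
  set Kn : NNReal := ⟨K, hK0⟩ with hKn
  have hL : LipschitzWith Kn f := by
    apply LipschitzWith.of_dist_le_mul
    intro x y
    rw [dist_eq_norm, dist_eq_norm]
    exact hlip x y
  have hC : ContractingWith Kn f := by
    refine ⟨?_, hL⟩
    rw [← NNReal.coe_lt_one]
    exact hcontr
  have : Nonempty (EuclideanSpace ℝ (Fin d)) := ⟨0⟩
  refine ⟨ContractingWith.fixedPoint f hC, hC.fixedPoint_isFixedPt, ?_, ?_⟩
  · intro y hy
    exact hC.fixedPoint_unique hy
  · intro x₀ t
    induction t with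
    | zero => simp
    | succ n ih =>
      rw [Function.iterate_succ_apply']
      calc ‖f (f^[n] x₀) - ContractingWith.fixedPoint f hC‖
          = ‖f (f^[n] x₀) - f (ContractingWith.fixedPoint f hC)‖ := by
            rw [hC.fixedPoint_isFixedPt.eq]
        _ ≤ K * ‖f^[n] x₀ - ContractingWith.fixedPoint f hC‖ := hlip _ _
        _ ≤ K * (K ^ n * ‖x₀ - ContractingWith.fixedPoint f hC‖) := by
            gcongr
        _ = K ^ (n + 1) * ‖x₀ - ContractingWith.fixedPoint f hC‖ := by ring
end

section
/- Suppose the discomfort depends on the receptivity: let D : [α_min, 1] → [0, ∞) be L-Lipschitz, and define T(α) = clip(α + η↑(α₀ − α) − η↓·max(D(α) − θ, 0), α_min, 1). If η↓·L < η↑, then T is a contraction on [α_min, 1] with Lipschitz constant at most (1 − η↑) + η↓·L < 1, and hence T has a unique fixed point in [α_min, 1] to which all iterates converge. -/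
/-- Clipping to an interval: `clip z a b = min (max z a) b`. -/
def clip (z a b : ℝ) : ℝ := min (max z a) b

/-- The sentinel update with state-dependent discomfort `D(α)`:
`T(α) = clip(α + η↑(α₀ − α) − η↓·[D(α) − θ]₊, α_min, 1)`. -/
def sentinelD (αmin α₀ ηup ηdown θ : ℝ) (D : ℝ → ℝ) (α : ℝ) : ℝ :=
  clip (α + ηup * (α₀ - α) - ηdown * max (D α - θ) 0) αmin 1

lemma clip_lip (x y a b : ℝ) : |clip x a b - clip y a b| ≤ |x - y| := by
  unfold clip
  refine (abs_min_sub_min_le_max _ _ _ _).trans (max_le ?_ ?_)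
  · exact abs_max_sub_max_le_abs x y a
  · simp [abs_nonneg]

lemma clip_mem {a b : ℝ} (hab : a ≤ b) (x : ℝ) : clip x a b ∈ Set.Icc a b := by
  unfold clip
  constructor
  · exact le_min (le_max_right _ _) hab
  · exact min_le_right _ _

/-- Suppose the discomfort `D : [α_min,1] → [0,∞)` is `L`-Lipschitz and
`η↓·L < η↑`.  Then the sentinel update `T` is a contraction on `[α_min, 1]` with Lipschitz
constant at most `(1 − η↑) + η↓·L < 1`, and hence `T` has a unique fixed point in
`[α_min, 1]` to which all iterates converge. -/
theorem stmt10 (αmin α₀ ηup ηdown θ L : ℝ) (D : ℝ → ℝ)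
    (h1 : 0 < αmin) (h2 : αmin < α₀) (h3 : α₀ ≤ 1)
    (h4 : 0 < ηup) (h5 : ηup < 1) (h6 : 0 < ηdown) (h7 : 0 ≤ θ) (hL : 0 ≤ L)
    (hD0 : ∀ α ∈ Set.Icc αmin 1, 0 ≤ D α)
    (hDLip : ∀ α ∈ Set.Icc αmin 1, ∀ β ∈ Set.Icc αmin 1, |D α - D β| ≤ L * |α - β|)
    (hgain : ηdown * L < ηup) :
    ((1 - ηup) + ηdown * L < 1) ∧
    (∀ α ∈ Set.Icc αmin 1, ∀ β ∈ Set.Icc αmin 1,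
      |sentinelD αmin α₀ ηup ηdown θ D α - sentinelD αmin α₀ ηup ηdown θ D β| ≤
        ((1 - ηup) + ηdown * L) * |α - β|) ∧
    ∃ αstar ∈ Set.Icc αmin 1,
      sentinelD αmin α₀ ηup ηdown θ D αstar = αstar ∧
      (∀ β ∈ Set.Icc αmin 1, sentinelD αmin α₀ ηup ηdown θ D β = β → β = αstar) ∧
      ∀ α₀' ∈ Set.Icc αmin 1,
        Filter.Tendsto (fun t : ℕ => (sentinelD αmin α₀ ηup ηdown θ D)^[t] α₀')
          Filter.atTop (nhds αstar) := by
  set k : ℝ := (1 - ηup) + ηdown * L with hk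
  have hk0 : 0 ≤ k := by nlinarith
  have hk1 : k < 1 := by nlinarith
  have hab : αmin ≤ 1 := le_trans h2.le h3
  set T := sentinelD αmin α₀ ηup ηdown θ D with hT
  -- the central Lipschitz estimate
  have hlip : ∀ α ∈ Set.Icc αmin 1, ∀ β ∈ Set.Icc αmin 1,
      |T α - T β| ≤ k * |α - β| := by
    intro α hα β hβ
    have h1 : |T α - T β| ≤
        |(α + ηup * (α₀ - α) - ηdown * max (D α - θ) 0) -
         (β + ηup * (α₀ - β) - ηdown * max (D β - θ) 0)| := clip_lip _ _ _ _
    have h2 : |(α + ηup * (α₀ - α) - ηdown * max (D α - θ) 0) -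
         (β + ηup * (α₀ - β) - ηdown * max (D β - θ) 0)| ≤
        (1 - ηup) * |α - β| + ηdown * |max (D α - θ) 0 - max (D β - θ) 0| := by
      have : (α + ηup * (α₀ - α) - ηdown * max (D α - θ) 0) -
         (β + ηup * (α₀ - β) - ηdown * max (D β - θ) 0) =
         (1 - ηup) * (α - β) - ηdown * (max (D α - θ) 0 - max (D β - θ) 0) := by ring
      rw [this]
      refine (abs_sub _ _).trans ?_
      rw [abs_mul, abs_mul, abs_of_nonneg (by linarith : (0:ℝ) ≤ 1 - ηup),
        abs_of_nonneg h6.le]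
    have h3 : |max (D α - θ) 0 - max (D β - θ) 0| ≤ L * |α - β| := by
      refine (abs_max_sub_max_le_abs _ _ _).trans ?_
      have := hDLip α hα β hβ
      calc |D α - θ - (D β - θ)| = |D α - D β| := by ring_nf
        _ ≤ L * |α - β| := this
    calc |T α - T β| ≤ (1 - ηup) * |α - β| + ηdown * |max (D α - θ) 0 - max (D β - θ) 0| :=
          h1.trans h2
      _ ≤ (1 - ηup) * |α - β| + ηdown * (L * |α - β|) := by
          have := mul_le_mul_of_nonneg_left h3 h6.le
          linarith
      _ = k * |α - β| := by ring
  refine ⟨hk1, hlip, ?_⟩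
  -- Banach fixed point on the subtype
  have hmem : ∀ α : ℝ, T α ∈ Set.Icc αmin 1 := fun α => clip_mem hab _
  set S := Set.Icc αmin 1 with hS
  let f : S → S := fun x => ⟨T x, hmem x⟩
  have hne : Nonempty S := ⟨⟨αmin, le_refl _, hab⟩⟩
  let K : NNReal := ⟨k, hk0⟩
  have hKlt : K < 1 := by
    rw [← NNReal.coe_lt_coe]; exact hk1
  have hflip : LipschitzWith K f := by
    apply LipschitzWith.of_dist_le_mul
    intro x y
    simp only [f, Subtype.dist_eq, Real.dist_eq]
    exact hlip x x.2 y y.2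
  have hC : ContractingWith K f := ⟨hKlt, hflip⟩
  haveI : CompleteSpace S := (isClosed_Icc (a := αmin) (b := 1)).completeSpace_coe
  haveI := hne
  let xs : S := ContractingWith.fixedPoint f hC
  have hiter : ∀ (t : ℕ) (x : S), ((f^[t] x : S) : ℝ) = T^[t] (x : ℝ) := by
    intro t
    induction t with
    | zero => intro x; simp
    | succ t ih =>
      intro x
      rw [Function.iterate_succ_apply, Function.iterate_succ_apply]
      exact ih (f x)
  refine ⟨(xs : ℝ), xs.2, ?_, ?_, ?_⟩
  · have := hC.fixedPoint_isFixedPt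
    exact congrArg Subtype.val this
  · intro β hβ hfixβ
    have : (⟨β, hβ⟩ : S) = xs :=
      hC.fixedPoint_unique (by exact Subtype.ext hfixβ)
    exact congrArg Subtype.val this
  · intro a ha
    have h := hC.tendsto_iterate_fixedPoint ⟨a, ha⟩
    have h2 := (continuous_subtype_val.tendsto xs).comp h
    have heq : (Subtype.val ∘ fun n => f^[n] (⟨a, ha⟩ : S)) = fun t => T^[t] a :=
      funext fun t => hiter t ⟨a, ha⟩
    rw [heq] at h2
    exact h2
end
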